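/- arXiv:2106.04756 — 3 statements merged into one kernel-verified Lean document; each statement's English description precedes it below -/
import Mathlib

section
/- Scale invariance of PDHG with the scale-invariant primal weight (Proposition 1): Suppose K̂ = γK, ĉ = γα_y c, q̂ = γα_x q, X̂ = α_x·X := {α_x x : x ∈ X}, and Ŷ = Y, for scalars α_y, α_x, γ > 0, where ‖c‖₂ > 0 and ‖q‖₂ > 0 (hence also ‖ĉ‖₂, ‖q̂‖₂ > 0). Let ω = ‖c‖₂/‖q‖₂ and ω̂ = ‖ĉ‖₂/‖q̂‖₂, fix any step size η > 0 and set η̂ = η/γ. Let (x^k, y^k) be the PDHG iterates for the data (K, c, q, X, Y) with parameters (η, ω), and let (x̂^k, ŷ^k) be the PDHG iterates for the data (K̂, ĉ, q̂, X̂, Ŷ) with parameters (η̂, ω̂). If x̂⁰ = α_x x⁰ and ŷ⁰ = α_y y⁰, then x̂^k = α_x x^k and ŷ^k = α_y y^k for all k ≥ 0. -/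
open Pointwise

/-- `p` is the Euclidean metric projection of `v` onto the set `S`. -/
def IsProj {E : Type*} [NormedAddCommGroup E] (S : Set E) (v p : E) : Prop :=
  p ∈ S ∧ ∀ w ∈ S, dist v p ≤ dist v w


lemma isProj_inner_le {E : Type*} [NormedAddCommGroup E] [InnerProductSpace ℝ E]
    {S : Set E} (hS : Convex ℝ S) {v p : E} (h : IsProj S v p) :
    ∀ w ∈ S, inner ℝ (v - p) (w - p) ≤ (0 : ℝ) := by
  haveI : Nonempty S := ⟨⟨p, h.1⟩⟩
  have hmin : ‖v - p‖ = ⨅ w : S, ‖v - w‖ := by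
    apply le_antisymm
    · exact le_ciInf fun w => by simpa [dist_eq_norm] using h.2 w w.2
    · exact ciInf_le ⟨0, fun r ⟨w, hw⟩ => hw ▸ norm_nonneg _⟩ (⟨p, h.1⟩ : S)
  exact (norm_eq_iInf_iff_real_inner_le_zero hS h.1).mp hmin

lemma isProj_unique {E : Type*} [NormedAddCommGroup E] [InnerProductSpace ℝ E]
    {S : Set E} (hS : Convex ℝ S) {v p p' : E}
    (h : IsProj S v p) (h' : IsProj S v p') : p = p' := by
  have h1 := isProj_inner_le hS h p' h'.1
  have h2 := isProj_inner_le hS h' p h.1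
  have hsq : (‖p' - p‖ : ℝ)^2 ≤ 0 := by
    have e : (inner ℝ (p' - p) (p' - p) : ℝ)
        = inner ℝ (v - p) (p' - p) - inner ℝ (v - p') (p' - p) := by
      rw [← inner_sub_left]; congr 1; abel
    have h2' : (0:ℝ) ≤ inner ℝ (v - p') (p' - p) := by
      have h2'' := h2
      rw [show p - p' = -(p' - p) by abel, inner_neg_right] at h2''
      linarith
    rw [← real_inner_self_eq_norm_sq, e]; linarith
  have hnn : ‖p' - p‖ = 0 := by nlinarith [norm_nonneg (p' - p)]
  have hz := sub_eq_zero.mp (norm_eq_zero.mp hnn)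
  exact hz.symm

lemma isProj_smul_set {E : Type*} [NormedAddCommGroup E] [NormedSpace ℝ E]
    {S : Set E} {v p : E} {α : ℝ} (hα : 0 < α) (h : IsProj S v p) :
    IsProj (α • S) (α • v) (α • p) := by
  refine ⟨Set.smul_mem_smul_set h.1, ?_⟩
  rintro w ⟨u, hu, rfl⟩
  rw [dist_smul₀, dist_smul₀]
  exact mul_le_mul_of_nonneg_left (h.2 u hu) (norm_nonneg _)

lemma isProj_smul_cone {E : Type*} [NormedAddCommGroup E] [NormedSpace ℝ E]
    {S : Set E} (hcone : ∀ t : ℝ, 0 ≤ t → ∀ y ∈ S, t • y ∈ S)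
    {v p : E} {α : ℝ} (hα : 0 < α) (h : IsProj S v p) :
    IsProj S (α • v) (α • p) := by
  refine ⟨hcone α hα.le p h.1, ?_⟩
  intro w hw
  have hw' : α⁻¹ • w ∈ S := hcone α⁻¹ (inv_nonneg.mpr hα.le) w hw
  have := h.2 _ hw'
  calc dist (α • v) (α • p) = ‖α‖ * dist v p := dist_smul₀ ..
    _ ≤ ‖α‖ * dist v (α⁻¹ • w) := mul_le_mul_of_nonneg_left this (norm_nonneg _)
    _ = dist (α • v) (α • α⁻¹ • w) := (dist_smul₀ ..).symm
    _ = dist (α • v) w := by rw [smul_inv_smul₀ hα.ne']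

/-- **Scale invariance of PDHG with the scale-invariant primal weight** (Proposition 1).
With data `K̂ = γ • K`, `ĉ = (γ * αy) • c`, `q̂ = (γ * αx) • q`, `X̂ = αx • X`, `Ŷ = Y`,
primal weights `ω = ‖c‖/‖q‖`, `ω̂ = ‖ĉ‖/‖q̂‖`, step sizes `η` and `η̂ = η/γ`, if the
initial iterates satisfy `x̂⁰ = αx • x⁰` and `ŷ⁰ = αy • y⁰`, then `x̂ᵏ = αx • xᵏ` and
`ŷᵏ = αy • yᵏ` for all `k`. -/
theorem pdhg_scale_invariance {n m : ℕ}
    (K : EuclideanSpace ℝ (Fin n) →L[ℝ] EuclideanSpace ℝ (Fin m))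
    (c : EuclideanSpace ℝ (Fin n)) (q : EuclideanSpace ℝ (Fin m))
    (X : Set (EuclideanSpace ℝ (Fin n))) (Y : Set (EuclideanSpace ℝ (Fin m)))
    (hXne : X.Nonempty) (hXcl : IsClosed X) (hXcv : Convex ℝ X)
    (hYne : Y.Nonempty) (hYcl : IsClosed Y) (hYcv : Convex ℝ Y)
    (hYcone : ∀ t : ℝ, 0 ≤ t → ∀ y ∈ Y, t • y ∈ Y)
    (γ αx αy : ℝ) (hγ : 0 < γ) (hαx : 0 < αx) (hαy : 0 < αy)
    (hc : 0 < ‖c‖) (hq : 0 < ‖q‖)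
    (η : ℝ) (hη : 0 < η)
    (x xh : ℕ → EuclideanSpace ℝ (Fin n)) (y yh : ℕ → EuclideanSpace ℝ (Fin m))
    -- PDHG iterates for the data (K, c, q, X, Y) with parameters (η, ω = ‖c‖/‖q‖):
    (hx : ∀ k, IsProj X
      (x k - (η / (‖c‖ / ‖q‖)) • (c - ContinuousLinearMap.adjoint K (y k))) (x (k + 1)))
    (hy : ∀ k, IsProj Y
      (y k + (η * (‖c‖ / ‖q‖)) • (q - K ((2 : ℝ) • x (k + 1) - x k))) (y (k + 1)))
    -- PDHG iterates for the scaled data (K̂, ĉ, q̂, X̂, Ŷ) with parameters (η̂ = η/γ, ω̂):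
    (hxh : ∀ k, IsProj (αx • X)
      (xh k - ((η / γ) / (‖(γ * αy) • c‖ / ‖(γ * αx) • q‖)) •
        ((γ * αy) • c - ContinuousLinearMap.adjoint (γ • K) (yh k))) (xh (k + 1)))
    (hyh : ∀ k, IsProj Y
      (yh k + ((η / γ) * (‖(γ * αy) • c‖ / ‖(γ * αx) • q‖)) •
        ((γ * αx) • q - (γ • K) ((2 : ℝ) • xh (k + 1) - xh k))) (yh (k + 1)))
    (hx0 : xh 0 = αx • x 0) (hy0 : yh 0 = αy • y 0) :
    ∀ k, xh k = αx • x k ∧ yh k = αy • y k := by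
  intro k
  induction k with
  | zero => exact ⟨hx0, hy0⟩
  | succ k ih =>
    obtain ⟨ihx, ihy⟩ := ih
    have hγy : (0:ℝ) < γ * αy := by positivity
    have hγx : (0:ℝ) < γ * αx := by positivity
    have hnch : ‖(γ * αy) • c‖ = γ * αy * ‖c‖ := by
      rw [norm_smul, Real.norm_eq_abs, abs_of_pos hγy]
    have hnqh : ‖(γ * αx) • q‖ = γ * αx * ‖q‖ := by
      rw [norm_smul, Real.norm_eq_abs, abs_of_pos hγx]
    have hadj : ContinuousLinearMap.adjoint (γ • K) = γ • ContinuousLinearMap.adjoint K := by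
      simp
    have hc0 := hc.ne'
    have hq0 := hq.ne'
    have hγ0 := hγ.ne'
    have hαx0 := hαx.ne'
    have hαy0 := hαy.ne'
    have hveq : xh k - ((η / γ) / (‖(γ * αy) • c‖ / ‖(γ * αx) • q‖)) •
        ((γ * αy) • c - ContinuousLinearMap.adjoint (γ • K) (yh k))
        = αx • (x k - (η / (‖c‖ / ‖q‖)) • (c - ContinuousLinearMap.adjoint K (y k))) := by
      rw [ihx, ihy, hadj, hnch, hnqh]
      simp only [ContinuousLinearMap.smul_apply, map_smul]
      match_scalars <;> field_simp <;> ring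
    have hxs : xh (k + 1) = αx • x (k + 1) := by
      have h1 := hxh k
      rw [hveq] at h1
      exact (isProj_unique (hXcv.smul αx) (isProj_smul_set hαx (hx k)) h1).symm
    have hweq : yh k + ((η / γ) * (‖(γ * αy) • c‖ / ‖(γ * αx) • q‖)) •
        ((γ * αx) • q - (γ • K) ((2 : ℝ) • xh (k + 1) - xh k))
        = αy • (y k + (η * (‖c‖ / ‖q‖)) • (q - K ((2 : ℝ) • x (k + 1) - x k))) := by
      rw [ihy, ihx, hxs, hnch, hnqh]
      simp only [ContinuousLinearMap.smul_apply, map_smul, map_sub]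
      match_scalars <;> field_simp <;> ring
    have hys : yh (k + 1) = αy • y (k + 1) := by
      have h1 := hyh k
      rw [hweq] at h1
      exact (isProj_unique hYcv (isProj_smul_cone hYcone hαy (hy k)) h1).symm
    exact ⟨hxs, hys⟩
end

section
/- Lower bound on the adaptive step size candidate: Let K ∈ ℝ^{m×n} be a nonzero matrix, ω > 0, and let x, x' ∈ ℝⁿ and y, y' ∈ ℝᵐ be such that (y' − y)ᵀK(x' − x) > 0. Then the quantity η̄ = ‖(x' − x, y' − y)‖_ω² / (2(y' − y)ᵀK(x' − x)) satisfies η̄ ≥ 1/‖K‖₂. -/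
/-- **Lower bound on the adaptive step size candidate.** For a nonzero linear map
`K : ℝⁿ → ℝᵐ`, `ω > 0`, and points with `(y' − y)ᵀK(x' − x) > 0`, the quantity
`η̄ = ‖(x'−x, y'−y)‖_ω² / (2 (y'−y)ᵀK(x'−x))` satisfies `η̄ ≥ 1/‖K‖₂`, where
`‖(x,y)‖_ω² = ω‖x‖₂² + ‖y‖₂²/ω` and `‖K‖` is the spectral (operator) norm. -/
theorem stepsize_candidate_lower_bound {n m : ℕ}
    (K : EuclideanSpace ℝ (Fin n) →L[ℝ] EuclideanSpace ℝ (Fin m)) (hK : K ≠ 0)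
    (ω : ℝ) (hω : 0 < ω)
    (x x' : EuclideanSpace ℝ (Fin n)) (y y' : EuclideanSpace ℝ (Fin m))
    (hpos : 0 < (inner ℝ (y' - y) (K (x' - x)) : ℝ)) :
    1 / ‖K‖ ≤ (ω * ‖x' - x‖ ^ 2 + ‖y' - y‖ ^ 2 / ω) /
      (2 * (inner ℝ (y' - y) (K (x' - x)) : ℝ)) := by
  set u := x' - x
  set v := y' - y
  set s : ℝ := inner ℝ v (K u)
  have hKpos : 0 < ‖K‖ := norm_pos_iff.mpr hK
  rw [div_le_div_iff₀ hKpos (by linarith)]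
  have h1 : s ≤ ‖v‖ * ‖K u‖ := by
    calc s ≤ |s| := le_abs_self _
    _ = ‖(inner ℝ v (K u) : ℝ)‖ := (Real.norm_eq_abs _).symm
    _ ≤ ‖v‖ * ‖K u‖ := norm_inner_le_norm v (K u)
  have h2 : ‖K u‖ ≤ ‖K‖ * ‖u‖ := K.le_opNorm u
  have h3 : 2 * (‖u‖ * ‖v‖) ≤ ω * ‖u‖ ^ 2 + ‖v‖ ^ 2 / ω := by
    have key : ω * ‖u‖ ^ 2 + ‖v‖ ^ 2 / ω - 2 * (‖u‖ * ‖v‖) = (ω * ‖u‖ - ‖v‖) ^ 2 / ω := by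
      field_simp; ring
    nlinarith [div_nonneg (sq_nonneg (ω * ‖u‖ - ‖v‖)) hω.le]
  nlinarith [norm_nonneg u, norm_nonneg v, mul_le_mul_of_nonneg_left h2 (norm_nonneg v)]
end

section
/- The normalized duality gap vanishes exactly at saddle points: Let X ⊆ ℝⁿ and Y ⊆ ℝᵐ be nonempty closed convex sets, Z = X × Y, ω > 0, z = (x, y) ∈ Z, and r > 0. Then ρ_r(z) = 0 if and only if z is a saddle point of L on X × Y, i.e. L(x, ŷ) ≤ L(x, y) ≤ L(x̂, y) for all x̂ ∈ X and ŷ ∈ Y. -/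
/-- The Lagrangian `L(x, y) = cᵀx − yᵀKx + qᵀy` of the saddle-point problem. -/
noncomputable def Lagr {n m : ℕ}
    (K : EuclideanSpace ℝ (Fin n) →L[ℝ] EuclideanSpace ℝ (Fin m))
    (c : EuclideanSpace ℝ (Fin n)) (q : EuclideanSpace ℝ (Fin m))
    (x : EuclideanSpace ℝ (Fin n)) (y : EuclideanSpace ℝ (Fin m)) : ℝ :=
  (inner ℝ c x : ℝ) - (inner ℝ y (K x) : ℝ) + (inner ℝ q y : ℝ)

/-- The weighted norm `‖(x, y)‖_ω = √(ω‖x‖₂² + ‖y‖₂²/ω)`. -/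
noncomputable def wnorm {n m : ℕ} (ω : ℝ)
    (z : EuclideanSpace ℝ (Fin n) × EuclideanSpace ℝ (Fin m)) : ℝ :=
  Real.sqrt (ω * ‖z.1‖ ^ 2 + ‖z.2‖ ^ 2 / ω)

lemma lagr_affine_right {n m : ℕ}
    (K : EuclideanSpace ℝ (Fin n) →L[ℝ] EuclideanSpace ℝ (Fin m))
    (c : EuclideanSpace ℝ (Fin n)) (q : EuclideanSpace ℝ (Fin m))
    (x : EuclideanSpace ℝ (Fin n)) (y v : EuclideanSpace ℝ (Fin m)) (t : ℝ) :
    Lagr K c q x ((1 - t) • y + t • v)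
      = (1 - t) * Lagr K c q x y + t * Lagr K c q x v := by
  simp only [Lagr, inner_add_left, inner_add_right, real_inner_smul_left,
    real_inner_smul_right]
  ring

lemma lagr_affine_left {n m : ℕ}
    (K : EuclideanSpace ℝ (Fin n) →L[ℝ] EuclideanSpace ℝ (Fin m))
    (c : EuclideanSpace ℝ (Fin n)) (q : EuclideanSpace ℝ (Fin m))
    (x u : EuclideanSpace ℝ (Fin n)) (y : EuclideanSpace ℝ (Fin m)) (t : ℝ) :
    Lagr K c q ((1 - t) • x + t • u) y
      = (1 - t) * Lagr K c q x y + t * Lagr K c q u y := by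
  simp only [Lagr, map_add, map_smul, inner_add_left, inner_add_right,
    real_inner_smul_left, real_inner_smul_right]
  ring

lemma sq_div_bound (t d r ω : ℝ) (ht : 0 ≤ t) (hd : 0 ≤ d) (hr : 0 ≤ r) (hω : 0 < ω)
    (h : t * d ≤ r * Real.sqrt ω) : (t * d) ^ 2 / ω ≤ r ^ 2 := by
  rw [div_le_iff₀ hω]
  nlinarith [Real.sq_sqrt hω.le, Real.sqrt_nonneg ω, mul_nonneg ht hd,
    mul_nonneg hr (Real.sqrt_nonneg ω)]

lemma sq_mul_bound (t d r ω : ℝ) (ht : 0 ≤ t) (hd : 0 ≤ d) (hr : 0 ≤ r) (hω : 0 < ω)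
    (h : t * d ≤ r / Real.sqrt ω) : ω * (t * d) ^ 2 ≤ r ^ 2 := by
  have hs : (0:ℝ) < Real.sqrt ω := Real.sqrt_pos.mpr hω
  have h' : t * d * Real.sqrt ω ≤ r := (le_div_iff₀ hs).mp h
  nlinarith [Real.sq_sqrt hω.le, mul_nonneg (mul_nonneg ht hd) hs.le]

lemma min_ratio_bound (R d : ℝ) (hR : 0 ≤ R) (hd : 0 ≤ d) :
    min 1 (R / (d + 1)) * d ≤ R := by
  have hd1 : (0:ℝ) < d + 1 := by linarith
  calc min 1 (R / (d + 1)) * d ≤ (R / (d + 1)) * d :=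
        mul_le_mul_of_nonneg_right (min_le_right _ _) hd
    _ ≤ R := by rw [div_mul_eq_mul_div, div_le_iff₀ hd1]; nlinarith

set_option maxHeartbeats 2000000 in
/-- **The normalized duality gap vanishes exactly at saddle points.** For nonempty
closed convex `X ⊆ ℝⁿ`, `Y ⊆ ℝᵐ`, `z = (x, y) ∈ Z = X × Y`, `ω > 0`, and `r > 0`,
the normalized duality gap `ρ_r(z) = (1/r)·sup {L(x, ŷ) − L(x̂, y) : ẑ = (x̂, ŷ) ∈ Z,
‖ẑ − z‖_ω ≤ r}` equals `0` if and only if `z` is a saddle point of `L` on `X × Y`: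
`L(x, ŷ) ≤ L(x, y) ≤ L(x̂, y)` for all `x̂ ∈ X`, `ŷ ∈ Y`. -/
theorem normalized_gap_eq_zero_iff_saddle {n m : ℕ}
    (K : EuclideanSpace ℝ (Fin n) →L[ℝ] EuclideanSpace ℝ (Fin m))
    (c : EuclideanSpace ℝ (Fin n)) (q : EuclideanSpace ℝ (Fin m))
    (X : Set (EuclideanSpace ℝ (Fin n))) (Y : Set (EuclideanSpace ℝ (Fin m)))
    (hXne : X.Nonempty) (hXcl : IsClosed X) (hXcv : Convex ℝ X)
    (hYne : Y.Nonempty) (hYcl : IsClosed Y) (hYcv : Convex ℝ Y)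
    (ω r : ℝ) (hω : 0 < ω) (hr : 0 < r)
    (x : EuclideanSpace ℝ (Fin n)) (y : EuclideanSpace ℝ (Fin m))
    (hx : x ∈ X) (hy : y ∈ Y) :
    let B : Set (EuclideanSpace ℝ (Fin n) × EuclideanSpace ℝ (Fin m)) :=
      {zh | zh ∈ X ×ˢ Y ∧ wnorm ω (zh - (x, y)) ≤ r}
    let Φ : EuclideanSpace ℝ (Fin n) × EuclideanSpace ℝ (Fin m) → ℝ :=
      fun zh => Lagr K c q x zh.2 - Lagr K c q zh.1 y
    ((1 / r) * sSup (Φ '' B) = 0 ↔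
      (∀ yh ∈ Y, Lagr K c q x yh ≤ Lagr K c q x y) ∧
        (∀ xh ∈ X, Lagr K c q x y ≤ Lagr K c q xh y)) := by
  intro B Φ
  have hsqω : (0:ℝ) < Real.sqrt ω := Real.sqrt_pos.mpr hω
  have hsq := Real.sq_sqrt hω.le
  -- center is in B
  have hzB : ((x, y) : EuclideanSpace ℝ (Fin n) × EuclideanSpace ℝ (Fin m)) ∈ B := by
    refine ⟨⟨hx, hy⟩, ?_⟩
    simp [wnorm, hr.le]
  have hΦz : Φ (x, y) = 0 := by simp [Φ]
  -- B is closed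
  have hwcont : Continuous (fun zh : EuclideanSpace ℝ (Fin n) × EuclideanSpace ℝ (Fin m) =>
      wnorm ω (zh - (x, y))) := by
    unfold wnorm
    fun_prop
  have hBcl : IsClosed B := by
    have : B = (X ×ˢ Y) ∩ {zh | wnorm ω (zh - (x, y)) ≤ r} := rfl
    rw [this]
    exact (hXcl.prod hYcl).inter (isClosed_le hwcont continuous_const)
  -- B is bounded
  set a : ℝ := min ω ω⁻¹ with ha
  have ha0 : 0 < a := lt_min hω (inv_pos.mpr hω)
  have hBsub : B ⊆ Metric.closedBall (x, y) (r / Real.sqrt a) := by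
    rintro zh ⟨-, hle⟩
    set w := zh - (x, y) with hw
    have harg : 0 ≤ ω * ‖w.1‖ ^ 2 + ‖w.2‖ ^ 2 / ω := by positivity
    have hS : ω * ‖w.1‖ ^ 2 + ‖w.2‖ ^ 2 / ω ≤ r ^ 2 := by
      have h1 := Real.sq_sqrt harg
      have h2 := Real.sqrt_nonneg (ω * ‖w.1‖ ^ 2 + ‖w.2‖ ^ 2 / ω)
      have h3 := hle
      unfold wnorm at h3
      nlinarith
    have h1 : a * ‖w.1‖ ^ 2 ≤ ω * ‖w.1‖ ^ 2 :=
      mul_le_mul_of_nonneg_right (min_le_left _ _) (by positivity)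
    have h2 : a * ‖w.2‖ ^ 2 ≤ ‖w.2‖ ^ 2 / ω := by
      have := mul_le_mul_of_nonneg_right (min_le_right ω ω⁻¹) (sq_nonneg ‖w.2‖)
      calc a * ‖w.2‖ ^ 2 ≤ ω⁻¹ * ‖w.2‖ ^ 2 := this
        _ = ‖w.2‖ ^ 2 / ω := by ring
    have hnorm : ‖w‖ = max ‖w.1‖ ‖w.2‖ := rfl
    have hmax : ‖w‖ ^ 2 ≤ ‖w.1‖ ^ 2 + ‖w.2‖ ^ 2 := by
      rw [hnorm]
      rcases max_cases ‖w.1‖ ‖w.2‖ with ⟨h, -⟩ | ⟨h, -⟩ <;> rw [h] <;>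
        nlinarith [sq_nonneg ‖w.1‖, sq_nonneg ‖w.2‖]
    have hfin : a * ‖w‖ ^ 2 ≤ r ^ 2 := by nlinarith
    have hsa : (0:ℝ) < Real.sqrt a := Real.sqrt_pos.mpr ha0
    have : ‖w‖ ≤ r / Real.sqrt a := by
      rw [le_div_iff₀ hsa]
      nlinarith [Real.sq_sqrt ha0.le, norm_nonneg w, sq_nonneg (‖w‖ * Real.sqrt a - r)]
    simpa [Metric.mem_closedBall, dist_eq_norm, hw] using this
  have hBbd : Bornology.IsBounded B :=
    (Metric.isBounded_closedBall).subset hBsub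
  have hBcomp : IsCompact B := Metric.isCompact_of_isClosed_isBounded hBcl hBbd
  have hΦcont : Continuous Φ := by
    have h1 : Continuous fun zh : EuclideanSpace ℝ (Fin n) × EuclideanSpace ℝ (Fin m) =>
        (inner ℝ zh.2 (K x) : ℝ) := continuous_snd.inner continuous_const
    have h2 : Continuous fun zh : EuclideanSpace ℝ (Fin n) × EuclideanSpace ℝ (Fin m) =>
        (inner ℝ q zh.2 : ℝ) := continuous_const.inner continuous_snd
    have h3 : Continuous fun zh : EuclideanSpace ℝ (Fin n) × EuclideanSpace ℝ (Fin m) =>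
        (inner ℝ c zh.1 : ℝ) := continuous_const.inner continuous_fst
    have h4 : Continuous fun zh : EuclideanSpace ℝ (Fin n) × EuclideanSpace ℝ (Fin m) =>
        (inner ℝ y (K zh.1) : ℝ) := continuous_const.inner (K.continuous.comp continuous_fst)
    show Continuous fun zh : EuclideanSpace ℝ (Fin n) × EuclideanSpace ℝ (Fin m) =>
      Lagr K c q x zh.2 - Lagr K c q zh.1 y
    unfold Lagr
    exact ((continuous_const.sub h1).add h2).sub ((h3.sub h4).add continuous_const)
  have hbdd : BddAbove (Φ '' B) := (hBcomp.image hΦcont).bddAbove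
  have hne : (Φ '' B).Nonempty := ⟨0, (x, y), hzB, hΦz⟩
  have h0mem : (0:ℝ) ∈ Φ '' B := ⟨(x, y), hzB, hΦz⟩
  have key : sSup (Φ '' B) = 0 ↔ ∀ zh ∈ B, Φ zh ≤ 0 := by
    constructor
    · intro h zh hzh
      have := le_csSup hbdd (Set.mem_image_of_mem Φ hzh)
      linarith [this.trans_eq h]
    · intro h
      refine le_antisymm (csSup_le hne ?_) (le_csSup hbdd h0mem)
      rintro _ ⟨zh, hzh, rfl⟩
      exact h zh hzh
  have hmul : (1 / r) * sSup (Φ '' B) = 0 ↔ sSup (Φ '' B) = 0 := by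
    constructor
    · intro h
      rcases mul_eq_zero.mp h with h | h
      · exact absurd h (by positivity)
      · exact h
    · intro h; rw [h, mul_zero]
  rw [hmul, key]
  constructor
  · intro hle
    constructor
    · -- y-direction
      intro yh hyh
      set d : ℝ := ‖yh - y‖ with hd
      have hd0 : 0 ≤ d := norm_nonneg _
      set t : ℝ := min 1 (r * Real.sqrt ω / (d + 1)) with ht
      have ht0 : 0 < t := lt_min one_pos (by positivity)
      have ht1 : t ≤ 1 := min_le_left _ _
      set v : EuclideanSpace ℝ (Fin m) := (1 - t) • y + t • yh with hv
      have hvY : v ∈ Y := hYcv hy hyh (by linarith) ht0.le (by ring)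
      have htd : t * d ≤ r * Real.sqrt ω :=
        min_ratio_bound (r * Real.sqrt ω) d (by positivity) hd0
      have hmemB : ((x, v) : EuclideanSpace ℝ (Fin n) × EuclideanSpace ℝ (Fin m)) ∈ B := by
        refine ⟨⟨hx, hvY⟩, ?_⟩
        have hfst : ((x, v) - (x, y)).1 = (0 : EuclideanSpace ℝ (Fin n)) := by simp
        have hsnd : ((x, v) - (x, y)).2 = t • (yh - y) := by
          show v - y = t • (yh - y)
          rw [hv]; module
        unfold wnorm
        rw [hfst, hsnd]
        have hns : ‖t • (yh - y)‖ = t * d := by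
          rw [norm_smul, Real.norm_eq_abs, abs_of_pos ht0]
        have h3 : (t * d) ^ 2 / ω ≤ r ^ 2 :=
          sq_div_bound t d r ω ht0.le hd0 hr.le hω htd
        have harg : ω * ‖(0 : EuclideanSpace ℝ (Fin n))‖ ^ 2 + ‖t • (yh - y)‖ ^ 2 / ω ≤ r ^ 2 := by
          rw [norm_zero, hns]
          calc ω * 0 ^ 2 + (t * d) ^ 2 / ω = (t * d) ^ 2 / ω := by ring
            _ ≤ r ^ 2 := h3
        calc Real.sqrt (ω * ‖(0 : EuclideanSpace ℝ (Fin n))‖ ^ 2 + ‖t • (yh - y)‖ ^ 2 / ω)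
            ≤ Real.sqrt (r ^ 2) := Real.sqrt_le_sqrt harg
          _ = r := Real.sqrt_sq hr.le
      have hΦle := hle _ hmemB
      have hΦval : Φ (x, v) = t * (Lagr K c q x yh - Lagr K c q x y) := by
        show Lagr K c q x v - Lagr K c q x y = _
        rw [hv, lagr_affine_right]
        ring
      rw [hΦval] at hΦle
      nlinarith
    · -- x-direction
      intro xh hxh
      set d : ℝ := ‖xh - x‖ with hd
      have hd0 : 0 ≤ d := norm_nonneg _
      set t : ℝ := min 1 ((r / Real.sqrt ω) / (d + 1)) with ht
      have ht0 : 0 < t := lt_min one_pos (by positivity)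
      have ht1 : t ≤ 1 := min_le_left _ _
      set u : EuclideanSpace ℝ (Fin n) := (1 - t) • x + t • xh with hu
      have huX : u ∈ X := hXcv hx hxh (by linarith) ht0.le (by ring)
      have htd : t * d ≤ r / Real.sqrt ω :=
        min_ratio_bound (r / Real.sqrt ω) d (by positivity) hd0
      have htd' : t * d * Real.sqrt ω ≤ r := by
        rw [← le_div_iff₀ hsqω]; exact htd
      have hmemB : ((u, y) : EuclideanSpace ℝ (Fin n) × EuclideanSpace ℝ (Fin m)) ∈ B := by
        refine ⟨⟨huX, hy⟩, ?_⟩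
        have hfst : ((u, y) - (x, y)).1 = t • (xh - x) := by
          show u - x = t • (xh - x)
          rw [hu]; module
        have hsnd : ((u, y) - (x, y)).2 = (0 : EuclideanSpace ℝ (Fin m)) := by simp
        unfold wnorm
        rw [hfst, hsnd]
        have hns : ‖t • (xh - x)‖ = t * d := by
          rw [norm_smul, Real.norm_eq_abs, abs_of_pos ht0]
        have h2 : ω * (t * d) ^ 2 ≤ r ^ 2 :=
          sq_mul_bound t d r ω ht0.le hd0 hr.le hω htd
        have harg : ω * ‖t • (xh - x)‖ ^ 2 + ‖(0 : EuclideanSpace ℝ (Fin m))‖ ^ 2 / ω ≤ r ^ 2 := by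
          rw [norm_zero, hns]
          calc ω * (t * d) ^ 2 + 0 ^ 2 / ω = ω * (t * d) ^ 2 := by
                field_simp
                ring
            _ ≤ r ^ 2 := h2
        calc Real.sqrt (ω * ‖t • (xh - x)‖ ^ 2 + ‖(0 : EuclideanSpace ℝ (Fin m))‖ ^ 2 / ω)
            ≤ Real.sqrt (r ^ 2) := Real.sqrt_le_sqrt harg
          _ = r := Real.sqrt_sq hr.le
      have hΦle := hle _ hmemB
      have hΦval : Φ (u, y) = t * (Lagr K c q x y - Lagr K c q xh y) := by
        show Lagr K c q x y - Lagr K c q u y = _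
        rw [hu, lagr_affine_left]
        ring
      rw [hΦval] at hΦle
      nlinarith
  · rintro ⟨hsy, hsx⟩ zh ⟨⟨h1, h2⟩, -⟩
    have hA := hsy zh.2 h2
    have hB := hsx zh.1 h1
    show Lagr K c q x zh.2 - Lagr K c q zh.1 y ≤ 0
    linarith
end
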